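/- arXiv:2406.00145 — 3 statements merged into one kernel-verified Lean document; each statement's English description precedes it below -/
import Mathlib

section
/- With R↑(λ) = (i/λ)·√(ω₁+ω₂)·(ω₂/(ω₁+ω₂))^{iλ/(2πω₁)}·(ω₁/(ω₁+ω₂))^{iλ/(2πω₂)}·Γ(1 − iλ/(2πω₁))Γ(1 − iλ/(2πω₂))/Γ(1 − iλ(ω₁+ω₂)/(2πω₁ω₂)) and R↓(λ) = (λ/(2π√(ω₁+ω₂)))·(ω₂/(ω₁+ω₂))^{−iλ/(2πω₁)}·(ω₁/(ω₁+ω₂))^{−iλ/(2πω₂)}·Γ(iλ/(2πω₁))Γ(iλ/(2πω₂))/Γ(iλ(ω₁+ω₂)/(2πω₁ω₂)), one has R↑(λ)·R↓(λ) = sinh[(λ/2)(1/ω₁+1/ω₂)] / (2 sinh[λ/(2ω₁)] sinh[λ/(2ω₂)]) for all real λ ≠ 0 in the common domain of definition. -/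
open Real Complex

noncomputable def Rup (ω₁ ω₂ : ℝ) (lam : ℂ) : ℂ :=
  (Complex.I / lam) * (Real.sqrt (ω₁ + ω₂) : ℂ) *
    ((ω₂ / (ω₁ + ω₂) : ℝ) : ℂ) ^ (Complex.I * lam / (2 * π * ω₁)) *
    ((ω₁ / (ω₁ + ω₂) : ℝ) : ℂ) ^ (Complex.I * lam / (2 * π * ω₂)) *
    (Complex.Gamma (1 - Complex.I * lam / (2 * π * ω₁)) *
      Complex.Gamma (1 - Complex.I * lam / (2 * π * ω₂))) /
    Complex.Gamma (1 - Complex.I * lam * (ω₁ + ω₂) / (2 * π * ω₁ * ω₂))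

noncomputable def Rdown (ω₁ ω₂ : ℝ) (lam : ℂ) : ℂ :=
  (lam / (2 * π * (Real.sqrt (ω₁ + ω₂) : ℂ))) *
    ((ω₂ / (ω₁ + ω₂) : ℝ) : ℂ) ^ (-(Complex.I * lam) / (2 * π * ω₁)) *
    ((ω₁ / (ω₁ + ω₂) : ℝ) : ℂ) ^ (-(Complex.I * lam) / (2 * π * ω₂)) *
    (Complex.Gamma (Complex.I * lam / (2 * π * ω₁)) *
      Complex.Gamma (Complex.I * lam / (2 * π * ω₂))) /
    Complex.Gamma (Complex.I * lam * (ω₁ + ω₂) / (2 * π * ω₁ * ω₂))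

/-- Auxiliary algebraic identity in `ℂ`. -/
lemma wh_aux (A B C s l p : ℂ) (hA : A ≠ 0) (hB : B ≠ 0) (hs : s ≠ 0)
    (hl : l ≠ 0) (hp : p ≠ 0) :
    Complex.I / l * (l / (2*p*s)) * s * 1 * 1 *
      (p/(A*Complex.I) * (p/(B*Complex.I))) / (p/(C*Complex.I)) = C/(2*A*B) := by
  have hI := Complex.I_ne_zero
  field_simp

/-- Wiener–Hopf factorisation `R = R↑ · R↓` of the sinh-kernel symbol, for real `λ ≠ 0`. -/
theorem wiener_hopf_factorisation (ω₁ ω₂ : ℝ) (hω₁ : 0 < ω₁) (hω₂ : 0 < ω₂)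
    (lam : ℝ) (hlam : lam ≠ 0) :
    Rup ω₁ ω₂ (lam : ℂ) * Rdown ω₁ ω₂ (lam : ℂ) =
      Complex.sinh ((lam : ℂ) / 2 * (1 / ω₁ + 1 / ω₂)) /
        (2 * Complex.sinh ((lam : ℂ) / (2 * ω₁)) * Complex.sinh ((lam : ℂ) / (2 * ω₂))) := by
  have hπ : (π : ℝ) ≠ 0 := Real.pi_ne_zero
  have hπC : (π : ℂ) ≠ 0 := by exact_mod_cast hπ
  have hω₁C : (ω₁ : ℂ) ≠ 0 := by exact_mod_cast hω₁.ne'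
  have hω₂C : (ω₂ : ℂ) ≠ 0 := by exact_mod_cast hω₂.ne'
  have hlamC : (lam : ℂ) ≠ 0 := by exact_mod_cast hlam
  have hsum : (0:ℝ) < ω₁ + ω₂ := by linarith
  have hsqrt : (Real.sqrt (ω₁ + ω₂) : ℂ) ≠ 0 := by
    exact_mod_cast (Real.sqrt_ne_zero'.mpr hsum)
  have hx₂ : ((ω₂ / (ω₁ + ω₂) : ℝ) : ℂ) ≠ 0 := by
    exact_mod_cast (div_pos hω₂ hsum).ne'
  have hx₁ : ((ω₁ / (ω₁ + ω₂) : ℝ) : ℂ) ≠ 0 := by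
    exact_mod_cast (div_pos hω₁ hsum).ne'
  set a : ℂ := Complex.I * lam / (2 * π * ω₁) with ha
  set b : ℂ := Complex.I * lam / (2 * π * ω₂) with hb
  have hab : Complex.I * lam * (ω₁ + ω₂) / (2 * π * ω₁ * ω₂) = a + b := by
    rw [ha, hb]; field_simp; ring
  have hP₂ : ((ω₂ / (ω₁ + ω₂) : ℝ) : ℂ) ^ a *
      ((ω₂ / (ω₁ + ω₂) : ℝ) : ℂ) ^ (-(Complex.I * (lam:ℂ)) / (2 * π * ω₁)) = 1 := by
    have : -(Complex.I * (lam:ℂ)) / (2 * π * ω₁) = -a := by rw [ha]; ring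
    rw [this, Complex.cpow_neg]
    exact mul_inv_cancel₀ (fun h => hx₂ ((Complex.cpow_eq_zero_iff _ _).mp h).1)
  have hP₁ : ((ω₁ / (ω₁ + ω₂) : ℝ) : ℂ) ^ b *
      ((ω₁ / (ω₁ + ω₂) : ℝ) : ℂ) ^ (-(Complex.I * (lam:ℂ)) / (2 * π * ω₂)) = 1 := by
    have : -(Complex.I * (lam:ℂ)) / (2 * π * ω₂) = -b := by rw [hb]; ring
    rw [this, Complex.cpow_neg]
    exact mul_inv_cancel₀ (fun h => hx₁ ((Complex.cpow_eq_zero_iff _ _).mp h).1)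
  have hsa : Complex.sin ((π:ℂ) * a) = Complex.sinh ((lam:ℂ) / (2 * ω₁)) * Complex.I := by
    have : (π:ℂ) * a = ((lam:ℂ) / (2 * ω₁)) * Complex.I := by
      rw [ha]; field_simp
    rw [this, Complex.sin_mul_I]
  have hsb : Complex.sin ((π:ℂ) * b) = Complex.sinh ((lam:ℂ) / (2 * ω₂)) * Complex.I := by
    have : (π:ℂ) * b = ((lam:ℂ) / (2 * ω₂)) * Complex.I := by
      rw [hb]; field_simp
    rw [this, Complex.sin_mul_I]
  have hsab : Complex.sin ((π:ℂ) * (a + b)) =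
      Complex.sinh ((lam : ℂ) / 2 * (1 / ω₁ + 1 / ω₂)) * Complex.I := by
    have : (π:ℂ) * (a + b) = ((lam : ℂ) / 2 * (1 / ω₁ + 1 / ω₂)) * Complex.I := by
      rw [ha, hb]; field_simp
    rw [this, Complex.sin_mul_I]
  have hsinh : ∀ x : ℝ, x ≠ 0 → Complex.sinh (x : ℂ) ≠ 0 := by
    intro x hx
    rw [← Complex.ofReal_sinh]
    exact_mod_cast Real.sinh_ne_zero.mpr hx
  have hA : Complex.sinh ((lam:ℂ) / (2 * ω₁)) ≠ 0 := by
    have := hsinh (lam / (2 * ω₁)) (by positivity)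
    simpa using this
  have hB : Complex.sinh ((lam:ℂ) / (2 * ω₂)) ≠ 0 := by
    have := hsinh (lam / (2 * ω₂)) (by positivity)
    simpa using this
  have hGa := Complex.Gamma_mul_Gamma_one_sub a
  have hGb := Complex.Gamma_mul_Gamma_one_sub b
  have hGab := Complex.Gamma_mul_Gamma_one_sub (a + b)
  have expand : Rup ω₁ ω₂ (lam : ℂ) * Rdown ω₁ ω₂ (lam : ℂ) =
      (Complex.I / (lam:ℂ)) * ((lam:ℂ) / (2 * π * (Real.sqrt (ω₁ + ω₂) : ℂ))) *
        (Real.sqrt (ω₁ + ω₂) : ℂ) *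
        (((ω₂ / (ω₁ + ω₂) : ℝ) : ℂ) ^ a *
          ((ω₂ / (ω₁ + ω₂) : ℝ) : ℂ) ^ (-(Complex.I * (lam:ℂ)) / (2 * π * ω₁))) *
        (((ω₁ / (ω₁ + ω₂) : ℝ) : ℂ) ^ b *
          ((ω₁ / (ω₁ + ω₂) : ℝ) : ℂ) ^ (-(Complex.I * (lam:ℂ)) / (2 * π * ω₂))) *
        ((Complex.Gamma a * Complex.Gamma (1 - a)) *
          (Complex.Gamma b * Complex.Gamma (1 - b))) /
        (Complex.Gamma (a + b) * Complex.Gamma (1 - (a + b))) := by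
    unfold Rup Rdown
    rw [hab]
    ring
  rw [expand, hP₁, hP₂, hGa, hGb, hGab, hsa, hsb, hsab]
  exact wh_aux _ _ _ _ _ _ hA hB hsqrt hlamC hπC
end

section
/- Let r ≥ r₀ for r₀ sufficiently large, N ≥ 1, τ_N = ln N ≥ 1, α ∈ ℝ, and let g : ℝ → ℝ satisfy 0 ≤ g(μ) ≤ c e^{−r c' cosh μ} for constants c, c' > 0. Then the potential V(λ) = (r/(N τ_N)) cosh(τ_N λ) − α λ/N − (1/(2πN)) ∫_ℝ g(τ_N μ)/cosh(τ_N(λ−μ)) dμ is strictly convex on ℝ; more precisely V''(λ) ≥ (τ_N/N)(r − C e^{−r c'}) > 0 for some constant C independent of r, N. -/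
open Real MeasureTheory

lemma cosh_ge_quad (t : ℝ) : 1 + t ^ 2 / 8 ≤ Real.cosh t := by
  rw [← Real.cosh_abs, Real.cosh_eq]
  set u := |t| with hu
  have hu0 : 0 ≤ u := abs_nonneg t
  have h2 : -u + 1 ≤ Real.exp (-u) := Real.add_one_le_exp (-u)
  have h3 : Real.exp u = Real.exp (u / 2) ^ 2 := by
    rw [sq, ← Real.exp_add]; ring_nf
  have h4 : (1 + u / 2) ^ 2 ≤ Real.exp (u / 2) ^ 2 := by
    have := Real.add_one_le_exp (u / 2)
    nlinarith [Real.exp_nonneg (u / 2)]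
  have ht : t ^ 2 = u ^ 2 := (sq_abs t).symm
  nlinarith [h4, h2, h3]

lemma sech_hasDerivAt (t : ℝ) :
    HasDerivAt (fun s => (Real.cosh s)⁻¹) (-Real.sinh t / Real.cosh t ^ 2) t :=
  (Real.hasDerivAt_cosh t).inv (Real.cosh_pos t).ne'

lemma sech_hasDerivAt2 (t : ℝ) :
    HasDerivAt (fun s => -Real.sinh s / Real.cosh s ^ 2)
      ((2 * Real.sinh t ^ 2 - Real.cosh t ^ 2) / Real.cosh t ^ 3) t := by
  have h1 : HasDerivAt (fun s => -Real.sinh s) (-Real.cosh t) t := (Real.hasDerivAt_sinh t).neg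
  have h2 : HasDerivAt (fun s => Real.cosh s ^ 2) (2 * Real.cosh t ^ 1 * Real.sinh t) t :=
    (Real.hasDerivAt_cosh t).pow 2 |>.congr_deriv (by push_cast; ring)
  have := h1.div h2 (by positivity)
  refine this.congr_deriv ?_
  have hc := (Real.cosh_pos t).ne'
  rw [div_eq_div_iff (by positivity) (by positivity)]
  ring

lemma abs_sech1_le (u : ℝ) : |(-Real.sinh u / Real.cosh u ^ 2)| ≤ 1 := by
  have h1 : 1 ≤ Real.cosh u := Real.one_le_cosh u
  have h2 : |Real.sinh u| ≤ Real.cosh u := by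
    have := Real.cosh_sq u
    have := Real.cosh_pos u
    nlinarith [abs_nonneg (Real.sinh u), sq_abs (Real.sinh u)]
  rw [abs_div, abs_neg, abs_pow, abs_of_pos (Real.cosh_pos u)]
  rw [div_le_one (by positivity)]
  nlinarith

lemma abs_sech2_le (u : ℝ) :
    |(2 * Real.sinh u ^ 2 - Real.cosh u ^ 2) / Real.cosh u ^ 3| ≤ 3 := by
  have h1 : 1 ≤ Real.cosh u := Real.one_le_cosh u
  have hs : Real.sinh u ^ 2 ≤ Real.cosh u ^ 2 := by nlinarith [Real.cosh_sq u, sq_nonneg (Real.sinh u)]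
  rw [abs_div, abs_pow, abs_of_pos (Real.cosh_pos u)]
  rw [div_le_iff₀ (by positivity)]
  rw [abs_le]
  constructor <;> nlinarith [sq_nonneg (Real.sinh u), Real.cosh_pos u]

lemma hasDerivAt_inner1 (τ μ lam : ℝ) :
    HasDerivAt (fun x : ℝ => (Real.cosh (τ * (x - μ)))⁻¹)
      (τ * (-Real.sinh (τ * (lam - μ)) / Real.cosh (τ * (lam - μ)) ^ 2)) lam := by
  have hφ : HasDerivAt (fun x : ℝ => τ * (x - μ)) τ lam := by
    simpa using ((hasDerivAt_id lam).sub_const μ).const_mul τ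
  have h := (sech_hasDerivAt (τ * (lam - μ))).comp lam hφ
  exact h.congr_deriv (by ring)

lemma hasDerivAt_inner2 (τ μ lam : ℝ) :
    HasDerivAt (fun x : ℝ => τ * (-Real.sinh (τ * (x - μ)) / Real.cosh (τ * (x - μ)) ^ 2))
      (τ ^ 2 * ((2 * Real.sinh (τ * (lam - μ)) ^ 2 - Real.cosh (τ * (lam - μ)) ^ 2) /
        Real.cosh (τ * (lam - μ)) ^ 3)) lam := by
  have hφ : HasDerivAt (fun x : ℝ => τ * (x - μ)) τ lam := by
    simpa using ((hasDerivAt_id lam).sub_const μ).const_mul τ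
  have h := ((sech_hasDerivAt2 (τ * (lam - μ))).comp lam hφ).const_mul τ
  exact h.congr_deriv (by ring)

lemma hasDerivAt_J1 (τ : ℝ) (G : ℝ → ℝ) (hG : Measurable G) (hGi : Integrable G) (lam : ℝ) :
    HasDerivAt (fun x : ℝ => ∫ μ : ℝ, G μ / Real.cosh (τ * (x - μ)))
      (∫ μ : ℝ, G μ * (τ * (-Real.sinh (τ * (lam - μ)) / Real.cosh (τ * (lam - μ)) ^ 2))) lam := by
  have hmeas1 : ∀ x : ℝ, AEStronglyMeasurable
      (fun μ : ℝ => G μ / Real.cosh (τ * (x - μ))) volume := by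
    intro x
    exact (hG.div ((Real.continuous_cosh.comp
      (continuous_const.mul (continuous_const.sub continuous_id))).measurable)).aestronglyMeasurable
  have hmeas2 : ∀ x : ℝ, AEStronglyMeasurable
      (fun μ : ℝ => G μ * (τ * (-Real.sinh (τ * (x - μ)) / Real.cosh (τ * (x - μ)) ^ 2))) volume := by
    intro x
    apply (hG.mul (Measurable.const_mul ?_ τ)).aestronglyMeasurable
    apply Measurable.div
    · exact ((Real.continuous_sinh.comp
        (continuous_const.mul (continuous_const.sub continuous_id))).measurable).neg
    · exact ((Real.continuous_cosh.comp
        (continuous_const.mul (continuous_const.sub continuous_id))).measurable).pow_const 2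
  have key := hasDerivAt_integral_of_dominated_loc_of_deriv_le (μ := volume)
      (F := fun x μ => G μ / Real.cosh (τ * (x - μ)))
      (F' := fun x μ => G μ * (τ * (-Real.sinh (τ * (x - μ)) / Real.cosh (τ * (x - μ)) ^ 2)))
      (bound := fun μ => |τ| * |G μ|) (x₀ := lam) (Metric.ball_mem_nhds lam one_pos)
      (Filter.Eventually.of_forall hmeas1) ?_ (hmeas2 lam) ?_ (hGi.abs.const_mul _) ?_
  · exact key.2
  · -- integrability of F lam
    apply hGi.abs.mono (hmeas1 lam)
    filter_upwards with μ
    rw [Real.norm_eq_abs, Real.norm_eq_abs, abs_abs, abs_div,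
      abs_of_pos (Real.cosh_pos _)]
    exact div_le_self (abs_nonneg _) (Real.one_le_cosh _)
  · -- bound
    filter_upwards with μ x _
    rw [Real.norm_eq_abs, abs_mul, abs_mul]
    rw [mul_comm (|τ|) (|G μ|)]
    apply mul_le_mul_of_nonneg_left _ (abs_nonneg _)
    calc |τ| * |(-Real.sinh (τ * (x - μ)) / Real.cosh (τ * (x - μ)) ^ 2)|
        ≤ |τ| * 1 := mul_le_mul_of_nonneg_left (abs_sech1_le _) (abs_nonneg _)
      _ = |τ| := mul_one _
  · -- differentiability
    filter_upwards with μ x _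
    have := (hasDerivAt_inner1 τ μ x).const_mul (G μ)
    simpa [div_eq_mul_inv] using this

lemma hasDerivAt_J2 (τ : ℝ) (G : ℝ → ℝ) (hG : Measurable G) (hGi : Integrable G) (lam : ℝ) :
    Integrable (fun μ : ℝ => G μ * (τ ^ 2 * ((2 * Real.sinh (τ * (lam - μ)) ^ 2 -
        Real.cosh (τ * (lam - μ)) ^ 2) / Real.cosh (τ * (lam - μ)) ^ 3))) volume ∧
    HasDerivAt (fun x : ℝ => ∫ μ : ℝ, G μ * (τ * (-Real.sinh (τ * (x - μ)) / Real.cosh (τ * (x - μ)) ^ 2)))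
      (∫ μ : ℝ, G μ * (τ ^ 2 * ((2 * Real.sinh (τ * (lam - μ)) ^ 2 -
        Real.cosh (τ * (lam - μ)) ^ 2) / Real.cosh (τ * (lam - μ)) ^ 3))) lam := by
  have hmeas2 : ∀ x : ℝ, AEStronglyMeasurable
      (fun μ : ℝ => G μ * (τ * (-Real.sinh (τ * (x - μ)) / Real.cosh (τ * (x - μ)) ^ 2))) volume := by
    intro x
    apply (hG.mul (Measurable.const_mul ?_ τ)).aestronglyMeasurable
    apply Measurable.div
    · exact ((Real.continuous_sinh.comp
        (continuous_const.mul (continuous_const.sub continuous_id))).measurable).neg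
    · exact ((Real.continuous_cosh.comp
        (continuous_const.mul (continuous_const.sub continuous_id))).measurable).pow_const 2
  have hmeas3 : ∀ x : ℝ, AEStronglyMeasurable
      (fun μ : ℝ => G μ * (τ ^ 2 * ((2 * Real.sinh (τ * (x - μ)) ^ 2 -
        Real.cosh (τ * (x - μ)) ^ 2) / Real.cosh (τ * (x - μ)) ^ 3))) volume := by
    intro x
    apply (hG.mul (Measurable.const_mul ?_ (τ ^ 2))).aestronglyMeasurable
    apply Measurable.div
    · apply Measurable.sub
      · exact (((Real.continuous_sinh.comp
          (continuous_const.mul (continuous_const.sub continuous_id))).measurable).pow_const 2).const_mul 2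
      · exact ((Real.continuous_cosh.comp
          (continuous_const.mul (continuous_const.sub continuous_id))).measurable).pow_const 2
    · exact ((Real.continuous_cosh.comp
        (continuous_const.mul (continuous_const.sub continuous_id))).measurable).pow_const 3
  have key := hasDerivAt_integral_of_dominated_loc_of_deriv_le (μ := volume)
      (F := fun x μ => G μ * (τ * (-Real.sinh (τ * (x - μ)) / Real.cosh (τ * (x - μ)) ^ 2)))
      (F' := fun x μ => G μ * (τ ^ 2 * ((2 * Real.sinh (τ * (x - μ)) ^ 2 -
        Real.cosh (τ * (x - μ)) ^ 2) / Real.cosh (τ * (x - μ)) ^ 3)))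
      (bound := fun μ => (3 * τ ^ 2) * |G μ|) (x₀ := lam) (Metric.ball_mem_nhds lam one_pos)
      (Filter.Eventually.of_forall hmeas2) ?_ (hmeas3 lam) ?_ (hGi.abs.const_mul _) ?_
  · exact key
  · -- integrability of F lam
    apply (hGi.abs.const_mul |τ|).mono (hmeas2 lam)
    filter_upwards with μ
    rw [Real.norm_eq_abs, Real.norm_eq_abs, abs_of_nonneg (by positivity : (0:ℝ) ≤ |τ| * |G μ|),
      abs_mul, mul_comm (|τ|) (|G μ|)]
    apply mul_le_mul_of_nonneg_left _ (abs_nonneg _)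
    rw [abs_mul]
    calc |τ| * |(-Real.sinh (τ * (lam - μ)) / Real.cosh (τ * (lam - μ)) ^ 2)|
        ≤ |τ| * 1 := mul_le_mul_of_nonneg_left (abs_sech1_le _) (abs_nonneg _)
      _ = |τ| := mul_one _
  · -- bound
    filter_upwards with μ x _
    rw [Real.norm_eq_abs, abs_mul, mul_comm (3 * τ ^ 2) (|G μ|)]
    apply mul_le_mul_of_nonneg_left _ (abs_nonneg _)
    rw [abs_mul, abs_pow, sq_abs]
    calc τ ^ 2 * |(2 * Real.sinh (τ * (x - μ)) ^ 2 - Real.cosh (τ * (x - μ)) ^ 2) /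
          Real.cosh (τ * (x - μ)) ^ 3|
        ≤ τ ^ 2 * 3 := mul_le_mul_of_nonneg_left (abs_sech2_le _) (sq_nonneg _)
      _ = 3 * τ ^ 2 := by ring
  · -- differentiability
    filter_upwards with μ x _
    exact (hasDerivAt_inner2 τ μ x).const_mul (G μ)
/-- Strict convexity of the rescaled Lukyanov potential for `r` large:
`V''(λ) ≥ (τ/N)(r − C e^{−r c'}) > 0`, with `C` independent of `r` and `N`. -/
theorem lukyanov_potential_strictly_convex (c c' : ℝ) (hc : 0 < c) (hc' : 0 < c') :
    ∃ C r₀ : ℝ, 0 < C ∧ 0 < r₀ ∧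
      ∀ r : ℝ, r₀ ≤ r → ∀ N : ℝ, 1 ≤ N → 1 ≤ Real.log N → ∀ α : ℝ,
      ∀ g : ℝ → ℝ, Measurable g →
        (∀ μ : ℝ, 0 ≤ g μ ∧ g μ ≤ c * Real.exp (-r * c' * Real.cosh μ)) →
        (StrictConvexOn ℝ Set.univ (fun lam : ℝ =>
            r / (N * Real.log N) * Real.cosh (Real.log N * lam) - α * lam / N -
              (1 / (2 * π * N)) *
                ∫ μ : ℝ, g (Real.log N * μ) / Real.cosh (Real.log N * (lam - μ))) ∧
          (0 < Real.log N / N * (r - C * Real.exp (-r * c'))) ∧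
          ∀ lam : ℝ,
            Real.log N / N * (r - C * Real.exp (-r * c')) ≤
              deriv (deriv (fun x : ℝ =>
                r / (N * Real.log N) * Real.cosh (Real.log N * x) - α * x / N -
                  (1 / (2 * π * N)) *
                    ∫ μ : ℝ, g (Real.log N * μ) / Real.cosh (Real.log N * (x - μ)))) lam) := by
  have hπ : 0 < π := Real.pi_pos
  set K := Real.sqrt (π / (c' / 8)) with hKdef
  have hK : 0 < K := Real.sqrt_pos.mpr (by positivity)
  set C := max 1 (3 * c * K / (2 * π)) with hCdef
  have hC1 : (1:ℝ) ≤ C := le_max_left _ _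
  have hC0 : (0:ℝ) < C := lt_of_lt_of_le one_pos hC1
  have hCge : 3 * c * K / (2 * π) ≤ C := le_max_right _ _
  refine ⟨C, C + 1, hC0, by linarith, ?_⟩
  intro r hr N hN hτ α g hg hgb
  set τ := Real.log N with hτdef
  have hτ0 : 0 < τ := lt_of_lt_of_le one_pos hτ
  have hN0 : 0 < N := lt_of_lt_of_le one_pos hN
  have hr1 : (1:ℝ) ≤ r := by linarith
  have hr0 : (0:ℝ) < r := by linarith
  have hE : 0 < Real.exp (-r * c') := Real.exp_pos _
  have hE1 : Real.exp (-r * c') ≤ 1 := by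
    have h := Real.exp_le_exp.mpr (show -r * c' ≤ 0 by nlinarith)
    simpa using h
  -- the integrand in the `g` variable and its dominating function
  set G : ℝ → ℝ := fun μ => g (τ * μ) with hGdef
  have hGmeas : Measurable G := hg.comp (measurable_id.const_mul τ)
  set b : ℝ := c' * τ ^ 2 / 8 with hbdef
  have hb : 0 < b := by positivity
  set Gb : ℝ → ℝ := fun μ => c * Real.exp (-r * c') * Real.exp (-b * μ ^ 2) with hGbdef
  have hGbnn : ∀ μ : ℝ, 0 ≤ Gb μ := by
    intro μ; simp only [hGbdef]; positivity
  have hGle : ∀ μ : ℝ, |G μ| ≤ Gb μ := by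
    intro μ
    have h0 := (hgb (τ * μ)).1
    have h1 := (hgb (τ * μ)).2
    simp only [hGdef, hGbdef]
    rw [abs_of_nonneg h0]
    refine h1.trans ?_
    have hcosh := cosh_ge_quad (τ * μ)
    have hkey : -r * c' * Real.cosh (τ * μ) ≤ -r * c' + -b * μ ^ 2 := by
      simp only [hbdef]
      nlinarith [sq_nonneg (τ * μ), mul_le_mul_of_nonneg_left hcosh
        (by positivity : (0:ℝ) ≤ r * c'),
        mul_nonneg (mul_nonneg (by linarith : (0:ℝ) ≤ r - 1) hc'.le) (sq_nonneg (τ * μ))]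
    calc c * Real.exp (-r * c' * Real.cosh (τ * μ))
        ≤ c * Real.exp (-r * c' + -b * μ ^ 2) :=
          mul_le_mul_of_nonneg_left (Real.exp_le_exp.mpr hkey) hc.le
      _ = c * Real.exp (-r * c') * Real.exp (-b * μ ^ 2) := by rw [Real.exp_add]; ring
  have hGbint : Integrable Gb :=
    (integrable_exp_neg_mul_sq hb).const_mul (c * Real.exp (-r * c'))
  have hGint : Integrable G :=
    hGbint.mono hGmeas.aestronglyMeasurable (Filter.Eventually.of_forall fun μ => by
      rw [Real.norm_eq_abs, Real.norm_eq_abs, abs_of_nonneg (hGbnn μ)]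
      exact hGle μ)
  have hGbInt_eq : ∫ μ : ℝ, Gb μ = c * Real.exp (-r * c') * (K / τ) := by
    simp only [hGbdef]
    rw [MeasureTheory.integral_const_mul, integral_gaussian]
    congr 1
    rw [show π / b = (π / (c' / 8)) / τ ^ 2 by simp only [hbdef]; field_simp]
    rw [Real.sqrt_div (by positivity) _, Real.sqrt_sq hτ0.le, hKdef]
  -- derivative notation
  set I₁ : ℝ → ℝ := fun x => ∫ μ : ℝ,
      G μ * (τ * (-Real.sinh (τ * (x - μ)) / Real.cosh (τ * (x - μ)) ^ 2)) with hI₁def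
  set I₂ : ℝ → ℝ := fun x => ∫ μ : ℝ,
      G μ * (τ ^ 2 * ((2 * Real.sinh (τ * (x - μ)) ^ 2 - Real.cosh (τ * (x - μ)) ^ 2) /
        Real.cosh (τ * (x - μ)) ^ 3)) with hI₂def
  have hJ1 : ∀ x : ℝ, HasDerivAt (fun y : ℝ => ∫ μ : ℝ, g (τ * μ) / Real.cosh (τ * (y - μ)))
      (I₁ x) x := fun x => hasDerivAt_J1 τ G hGmeas hGint x
  have hJ2 : ∀ x : ℝ, HasDerivAt I₁ (I₂ x) x := fun x =>
    (hasDerivAt_J2 τ G hGmeas hGint x).2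
  have hI₂int : ∀ x : ℝ, Integrable (fun μ : ℝ =>
      G μ * (τ ^ 2 * ((2 * Real.sinh (τ * (x - μ)) ^ 2 - Real.cosh (τ * (x - μ)) ^ 2) /
        Real.cosh (τ * (x - μ)) ^ 3))) := fun x => (hasDerivAt_J2 τ G hGmeas hGint x).1
  -- elementary derivative components
  have hsinh' : ∀ x : ℝ, HasDerivAt (fun y : ℝ => Real.sinh (τ * y)) (τ * Real.cosh (τ * x)) x := by
    intro x
    have hφ : HasDerivAt (fun y : ℝ => τ * y) τ x := by simpa using (hasDerivAt_id x).const_mul τ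
    exact ((Real.hasDerivAt_sinh (τ * x)).comp x hφ).congr_deriv (by ring)
  have hcosh' : ∀ x : ℝ, HasDerivAt (fun y : ℝ => Real.cosh (τ * y)) (τ * Real.sinh (τ * x)) x := by
    intro x
    have hφ : HasDerivAt (fun y : ℝ => τ * y) τ x := by simpa using (hasDerivAt_id x).const_mul τ
    exact ((Real.hasDerivAt_cosh (τ * x)).comp x hφ).congr_deriv (by ring)
  -- first derivative of the potential
  have hV' : ∀ x : ℝ, HasDerivAt (fun lam : ℝ =>
      r / (N * τ) * Real.cosh (τ * lam) - α * lam / N -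
        (1 / (2 * π * N)) * ∫ μ : ℝ, g (τ * μ) / Real.cosh (τ * (lam - μ)))
      (r / (N * τ) * (τ * Real.sinh (τ * x)) - α / N - (1 / (2 * π * N)) * I₁ x) x := by
    intro x
    have h1 : HasDerivAt (fun lam : ℝ => r / (N * τ) * Real.cosh (τ * lam))
        (r / (N * τ) * (τ * Real.sinh (τ * x))) x := (hcosh' x).const_mul _
    have h2 : HasDerivAt (fun lam : ℝ => α * lam / N) (α / N) x := by
      have := ((hasDerivAt_id x).const_mul α).div_const N
      exact this.congr_deriv (by ring)
    have h3 : HasDerivAt (fun lam : ℝ =>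
        (1 / (2 * π * N)) * ∫ μ : ℝ, g (τ * μ) / Real.cosh (τ * (lam - μ)))
        ((1 / (2 * π * N)) * I₁ x) x := (hJ1 x).const_mul _
    exact (h1.sub h2).sub h3
  have hderivV : deriv (fun lam : ℝ =>
      r / (N * τ) * Real.cosh (τ * lam) - α * lam / N -
        (1 / (2 * π * N)) * ∫ μ : ℝ, g (τ * μ) / Real.cosh (τ * (lam - μ))) =
      fun x => r / (N * τ) * (τ * Real.sinh (τ * x)) - α / N - (1 / (2 * π * N)) * I₁ x :=
    funext fun x => (hV' x).deriv
  -- second derivative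
  have hV'' : ∀ x : ℝ, HasDerivAt (fun x : ℝ =>
      r / (N * τ) * (τ * Real.sinh (τ * x)) - α / N - (1 / (2 * π * N)) * I₁ x)
      (r / (N * τ) * (τ * (τ * Real.cosh (τ * x))) - 0 - (1 / (2 * π * N)) * I₂ x) x := by
    intro x
    have h1 : HasDerivAt (fun y : ℝ => r / (N * τ) * (τ * Real.sinh (τ * y)))
        (r / (N * τ) * (τ * (τ * Real.cosh (τ * x)))) x :=
      ((hsinh' x).const_mul τ).const_mul _
    have h2 : HasDerivAt (fun _ : ℝ => α / N) (0:ℝ) x := hasDerivAt_const x _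
    have h3 : HasDerivAt (fun y : ℝ => (1 / (2 * π * N)) * I₁ y)
        ((1 / (2 * π * N)) * I₂ x) x := (hJ2 x).const_mul _
    exact (h1.sub h2).sub h3
  have hderiv2 : ∀ lam : ℝ, deriv (deriv (fun x : ℝ =>
      r / (N * τ) * Real.cosh (τ * x) - α * x / N -
        (1 / (2 * π * N)) * ∫ μ : ℝ, g (τ * μ) / Real.cosh (τ * (x - μ)))) lam =
      r / (N * τ) * (τ * (τ * Real.cosh (τ * lam))) - 0 - (1 / (2 * π * N)) * I₂ lam := by
    intro lam
    rw [hderivV]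
    exact (hV'' lam).deriv
  -- bound on the second derivative of the integral term
  have hI₂bd : ∀ lam : ℝ, |I₂ lam| ≤ 3 * τ ^ 2 * (c * Real.exp (-r * c') * (K / τ)) := by
    intro lam
    have hnorm : ∀ μ : ℝ, ‖G μ * (τ ^ 2 * ((2 * Real.sinh (τ * (lam - μ)) ^ 2 -
        Real.cosh (τ * (lam - μ)) ^ 2) / Real.cosh (τ * (lam - μ)) ^ 3))‖ ≤
        3 * τ ^ 2 * Gb μ := by
      intro μ
      rw [Real.norm_eq_abs, abs_mul, abs_mul, abs_pow, sq_abs]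
      calc |G μ| * (τ ^ 2 * |(2 * Real.sinh (τ * (lam - μ)) ^ 2 -
            Real.cosh (τ * (lam - μ)) ^ 2) / Real.cosh (τ * (lam - μ)) ^ 3|)
          ≤ Gb μ * (τ ^ 2 * 3) := by
            apply mul_le_mul (hGle μ) (mul_le_mul_of_nonneg_left (abs_sech2_le _) (sq_nonneg _))
              (by positivity) (hGbnn μ)
        _ = 3 * τ ^ 2 * Gb μ := by ring
    have h := norm_integral_le_of_norm_le (μ := volume) (hGbint.const_mul (3 * τ ^ 2))
      (Filter.Eventually.of_forall hnorm)
    rw [MeasureTheory.integral_const_mul, hGbInt_eq] at h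
    simpa [hI₂def, Real.norm_eq_abs] using h
  -- the key pointwise lower bound
  have hEq1 : (1 / (2 * π * N)) * (3 * τ ^ 2 * (c * Real.exp (-r * c') * (K / τ))) =
      τ / N * (3 * c * K / (2 * π) * Real.exp (-r * c')) := by
    field_simp
  have hbound : ∀ lam : ℝ,
      τ / N * (r - C * Real.exp (-r * c')) ≤
      deriv (deriv (fun x : ℝ =>
        r / (N * τ) * Real.cosh (τ * x) - α * x / N -
          (1 / (2 * π * N)) * ∫ μ : ℝ, g (τ * μ) / Real.cosh (τ * (x - μ)))) lam := by
    intro lam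
    rw [hderiv2 lam]
    have hcosh1 : 1 ≤ Real.cosh (τ * lam) := Real.one_le_cosh _
    have h1 : (1 / (2 * π * N)) * I₂ lam ≤ τ / N * (C * Real.exp (-r * c')) := by
      have ha : (1 / (2 * π * N)) * I₂ lam ≤
          (1 / (2 * π * N)) * (3 * τ ^ 2 * (c * Real.exp (-r * c') * (K / τ))) :=
        mul_le_mul_of_nonneg_left ((le_abs_self _).trans (hI₂bd lam)) (by positivity)
      rw [hEq1] at ha
      refine ha.trans ?_
      apply mul_le_mul_of_nonneg_left _ (by positivity)
      exact mul_le_mul_of_nonneg_right hCge hE.le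
    have h2 : τ / N * r ≤ r / (N * τ) * (τ * (τ * Real.cosh (τ * lam))) := by
      have he : r / (N * τ) * (τ * (τ * Real.cosh (τ * lam))) =
          τ / N * (r * Real.cosh (τ * lam)) := by field_simp
      rw [he]
      have : r * 1 ≤ r * Real.cosh (τ * lam) := mul_le_mul_of_nonneg_left hcosh1 hr0.le
      nlinarith [div_pos hτ0 hN0]
    have h3 : τ / N * (r - C * Real.exp (-r * c')) =
        τ / N * r - τ / N * (C * Real.exp (-r * c')) := by ring
    linarith
  have hpos : 0 < τ / N * (r - C * Real.exp (-r * c')) := by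
    have hCE : C * Real.exp (-r * c') ≤ C := by
      simpa using mul_le_mul_of_nonneg_left hE1 hC0.le
    exact mul_pos (div_pos hτ0 hN0) (by linarith)
  refine ⟨?_, hpos, hbound⟩
  -- strict convexity
  apply strictConvexOn_univ_of_deriv2_pos
  · exact Differentiable.continuous fun x => (hV' x).differentiableAt
  · intro x
    have h := hbound x
    calc (0:ℝ) < τ / N * (r - C * Real.exp (-r * c')) := hpos
      _ ≤ _ := h
end

section
/- Let χ₁₁ : {Im z > 0} → ℂ be holomorphic with continuous boundary values on ℝ and satisfy |χ₁₁(μ)| ≤ C/|μ|^{1/2} for |μ| ≥ 1 in the closed upper half-plane. Let g : ℝ → ℂ be C¹ with g, g' integrable, and b ∈ ℝ, τ > 0. Then ∫_{ℝ+iε'} χ₁₁(μ) ∫_b^{∞} g(η) e^{i τ μ (η−b)} dη dμ/(2πi) = 0 for any ε' > 0. -/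
open Real Complex MeasureTheory Filter Set Topology

namespace TailVanish

lemma ker_re (τ : ℝ) (μ : ℂ) (η b : ℝ) :
    (Complex.I * τ * μ * (↑η - ↑b)).re = -(τ * μ.im * (η - b)) := by
  simp [Complex.mul_re, Complex.mul_im]
  try ring

lemma norm_ker (τ : ℝ) (μ : ℂ) (η b : ℝ) :
    ‖Complex.exp (Complex.I * τ * μ * (↑η - ↑b))‖ = Real.exp (-(τ * μ.im * (η - b))) := by
  rw [Complex.norm_exp, ker_re]

lemma norm_ker_le_one {τ : ℝ} (hτ : 0 < τ) {μ : ℂ} (hμ : 0 ≤ μ.im) {η b : ℝ} (hη : b ≤ η) :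
    ‖Complex.exp (Complex.I * τ * μ * (↑η - ↑b))‖ ≤ 1 := by
  rw [norm_ker]
  apply Real.exp_le_one_iff.mpr
  have h1 : 0 ≤ τ * μ.im * (η - b) := by
    apply mul_nonneg (mul_nonneg hτ.le hμ)
    linarith
  linarith

lemma cont_ker (τ b : ℝ) (μ : ℂ) :
    Continuous (fun η : ℝ => Complex.exp (Complex.I * τ * μ * (↑η - ↑b))) := by
  fun_prop

/-- integrability of `v · ker` on `Ioi b` given `v` integrable. -/
lemma integrableOn_mul_ker {v : ℝ → ℂ} (hvc : Continuous v) (hvi : Integrable v)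
    {τ : ℝ} (hτ : 0 < τ) (b : ℝ) {μ : ℂ} (hμ : 0 ≤ μ.im) :
    IntegrableOn (fun η : ℝ => v η * Complex.exp (Complex.I * τ * μ * (↑η - ↑b))) (Set.Ioi b) := by
  refine Integrable.mono' (hvi.norm.restrict) ?_ ?_
  · exact (hvc.mul (cont_ker τ b μ)).aestronglyMeasurable
  · filter_upwards [ae_restrict_mem measurableSet_Ioi] with η hη
    rw [norm_mul]
    calc ‖v η‖ * ‖Complex.exp (Complex.I * τ * μ * (↑η - ↑b))‖
        ≤ ‖v η‖ * 1 := mul_le_mul_of_nonneg_left (norm_ker_le_one hτ hμ (le_of_lt hη)) (norm_nonneg _)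
      _ = ‖v η‖ := mul_one _


noncomputable def Inn (g : ℝ → ℂ) (τ b : ℝ) (μ : ℂ) : ℂ :=
  ∫ η in Set.Ioi b, g η * Complex.exp (Complex.I * τ * μ * (↑η - ↑b))

variable {g : ℝ → ℂ} {τ b : ℝ} {μ : ℂ}

lemma g_tendsto (hg : ContDiff ℝ 1 g) (hgi' : Integrable (deriv g)) (b : ℝ) :
    Tendsto g atTop (𝓝 (g b + ∫ x in Set.Ioi b, deriv g x)) := by
  have key : ∀ η : ℝ, g η = g b + ∫ x in b..η, deriv g x := by
    intro η
    rw [intervalIntegral.integral_deriv_eq_sub (fun x _ => (hg.differentiable one_ne_zero).differentiableAt)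
      (hgi'.intervalIntegrable)]
    ring
  have h2 : Tendsto (fun η : ℝ => g b + ∫ x in b..η, deriv g x) atTop
      (𝓝 (g b + ∫ x in Set.Ioi b, deriv g x)) :=
    ((intervalIntegral_tendsto_integral_Ioi b hgi'.integrableOn tendsto_id).const_add (g b))
  exact h2.congr (fun η => (key η).symm)

lemma ker_tendsto_zero (hτ : 0 < τ) (hμ : 0 < μ.im) (b : ℝ) :
    Tendsto (fun η : ℝ => Complex.exp (Complex.I * τ * μ * (↑η - ↑b))) atTop (𝓝 0) := by
  rw [tendsto_zero_iff_norm_tendsto_zero]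
  simp only [norm_ker]
  have h1 : Tendsto (fun η : ℝ => τ * μ.im * (η - b)) atTop atTop := by
    apply Tendsto.const_mul_atTop (by positivity)
    exact tendsto_atTop_add_const_right _ (-b) tendsto_id
  have h2 : Tendsto (fun η : ℝ => -(τ * μ.im * (η - b))) atTop atBot := by
    exact tendsto_neg_atBot_iff.mpr h1
  exact Real.tendsto_exp_atBot.comp h2

lemma inn_eq (hg : ContDiff ℝ 1 g) (hgi : Integrable g) (hgi' : Integrable (deriv g))
    (hτ : 0 < τ) (b : ℝ) (hμ : 0 < μ.im) :
    Complex.I * τ * μ * Inn g τ b μ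
      = -g b - ∫ η in Set.Ioi b, deriv g η * Complex.exp (Complex.I * τ * μ * (↑η - ↑b)) := by
  have hgc : Continuous g := hg.continuous
  have hgc' : Continuous (deriv g) := hg.continuous_deriv le_rfl
  have hfder : ∀ η : ℝ, HasDerivAt (fun η : ℝ => g η * Complex.exp (Complex.I * τ * μ * (↑η - ↑b)))
      (deriv g η * Complex.exp (Complex.I * τ * μ * (↑η - ↑b))
        + Complex.I * τ * μ * (g η * Complex.exp (Complex.I * τ * μ * (↑η - ↑b)))) η := by
    intro η
    have h1 : HasDerivAt (fun η : ℝ => Complex.I * τ * μ * ((η : ℂ) - (b : ℂ)))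
        (Complex.I * τ * μ) η := by
      simpa using ((Complex.ofRealCLM.hasDerivAt (x := η)).sub_const (b : ℂ)).const_mul
        (Complex.I * τ * μ)
    have h2 := ((hg.differentiable one_ne_zero).differentiableAt.hasDerivAt).mul h1.cexp
    exact h2.congr_deriv (by ring)
  have hint1 := integrableOn_mul_ker hgc' hgi' hτ (b := b) (μ := μ) hμ.le
  have hint2 := (integrableOn_mul_ker hgc hgi hτ (b := b) (μ := μ) hμ.le).const_mul
    (Complex.I * τ * μ)
  have htend : Tendsto (fun η : ℝ => g η * Complex.exp (Complex.I * τ * μ * (↑η - ↑b)))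
      atTop (𝓝 0) := by
    simpa using (g_tendsto hg hgi' b).mul (ker_tendsto_zero hτ hμ b)
  have hFTC := integral_Ioi_of_hasDerivAt_of_tendsto
    ((hgc.mul (cont_ker τ b μ)).continuousWithinAt) (fun x _ => hfder x) (hint1.add hint2) htend
  rw [integral_add hint1 hint2, integral_const_mul] at hFTC
  simp only [Pi.mul_apply, sub_self, mul_zero, Complex.exp_zero, mul_one, zero_sub] at hFTC
  rw [Inn]
  linear_combination hFTC


/-- the constant in the inner-integral bound -/
noncomputable def Kc (g : ℝ → ℂ) (b : ℝ) : ℝ := ‖g b‖ + ∫ η : ℝ, ‖deriv g η‖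

lemma Kc_nonneg (g : ℝ → ℂ) (b : ℝ) : 0 ≤ Kc g b :=
  add_nonneg (norm_nonneg _) (integral_nonneg fun _ => norm_nonneg _)

lemma norm_inn_le (hg : ContDiff ℝ 1 g) (hgi : Integrable g) (hgi' : Integrable (deriv g))
    (hτ : 0 < τ) (b : ℝ) (hμ : 0 < μ.im) :
    ‖Inn g τ b μ‖ ≤ Kc g b / (τ * ‖μ‖) := by
  have hμ0 : μ ≠ 0 := fun h => by simp [h] at hμ
  have habs : 0 < ‖μ‖ := norm_pos_iff.mpr hμ0
  have hc : ‖Complex.I * (τ:ℂ) * μ‖ = τ * ‖μ‖ := by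
    simp [norm_mul, Complex.norm_real, abs_of_pos hτ]
  have h1 : ‖∫ η in Set.Ioi b, deriv g η * Complex.exp (Complex.I * τ * μ * (↑η - ↑b))‖
      ≤ ∫ η : ℝ, ‖deriv g η‖ := by
    have h2 : ‖∫ η in Set.Ioi b, deriv g η * Complex.exp (Complex.I * τ * μ * (↑η - ↑b))‖
        ≤ ∫ η in Set.Ioi b, ‖deriv g η‖ := by
      apply norm_integral_le_of_norm_le (hgi'.norm.restrict)
      filter_upwards [ae_restrict_mem measurableSet_Ioi] with η hη
      rw [norm_mul]
      calc ‖deriv g η‖ * ‖Complex.exp (Complex.I * τ * μ * (↑η - ↑b))‖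
          ≤ ‖deriv g η‖ * 1 :=
            mul_le_mul_of_nonneg_left (norm_ker_le_one hτ hμ.le (le_of_lt hη)) (norm_nonneg _)
        _ = ‖deriv g η‖ := mul_one _
    exact h2.trans (setIntegral_le_integral hgi'.norm
      (Filter.Eventually.of_forall fun _ => norm_nonneg _))
  have key := inn_eq hg hgi hgi' hτ b hμ
  have h3 : τ * ‖μ‖ * ‖Inn g τ b μ‖ ≤ Kc g b := by
    have : ‖Complex.I * τ * μ * Inn g τ b μ‖ ≤ Kc g b := by
      rw [key, Kc]
      calc ‖-g b - ∫ η in Set.Ioi b, deriv g η * Complex.exp (Complex.I * τ * μ * (↑η - ↑b))‖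
          ≤ ‖-g b‖ + ‖∫ η in Set.Ioi b, deriv g η * Complex.exp (Complex.I * τ * μ * (↑η - ↑b))‖ :=
            norm_sub_le _ _
        _ ≤ ‖g b‖ + ∫ η : ℝ, ‖deriv g η‖ := by rw [norm_neg]; linarith
    rwa [norm_mul, hc] at this
  rw [le_div_iff₀ (by positivity)]
  linarith [h3]

/-- The full integrand bound. -/
lemma norm_F_le {χ : ℂ → ℂ} {C : ℝ}
    (hχb : ∀ μ : ℂ, 0 ≤ μ.im → 1 ≤ ‖μ‖ →
      ‖χ μ‖ ≤ C / ‖μ‖ ^ ((1 : ℝ) / 2))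
    (hC : 0 ≤ C)
    (hg : ContDiff ℝ 1 g) (hgi : Integrable g) (hgi' : Integrable (deriv g))
    (hτ : 0 < τ) (b : ℝ) (hμ : 0 < μ.im) (hμ1 : 1 ≤ ‖μ‖) :
    ‖χ μ * Inn g τ b μ‖ ≤ (C * Kc g b / τ) / ‖μ‖ ^ ((3:ℝ)/2) := by
  have habs : (0:ℝ) < ‖μ‖ := lt_of_lt_of_le one_pos hμ1
  have h1 : ‖χ μ‖ ≤ C / ‖μ‖ ^ ((1:ℝ)/2) := hχb μ hμ.le hμ1
  have h2 := norm_inn_le hg hgi hgi' hτ b hμ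
  have h3 : ‖μ‖ ^ ((1:ℝ)/2) * (τ * ‖μ‖) = τ * ‖μ‖ ^ ((3:ℝ)/2) := by
    rw [show ((3:ℝ)/2) = (1:ℝ)/2 + 1 by norm_num, Real.rpow_add habs, Real.rpow_one]
    ring
  rw [norm_mul]
  calc ‖χ μ‖ * ‖Inn g τ b μ‖
      ≤ (C / ‖μ‖ ^ ((1:ℝ)/2)) * (Kc g b / (τ * ‖μ‖)) :=
        mul_le_mul h1 h2 (norm_nonneg _) (by positivity)
    _ = C * Kc g b / (‖μ‖ ^ ((1:ℝ)/2) * (τ * ‖μ‖)) := div_mul_div_comm _ _ _ _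
    _ = (C * Kc g b / τ) / ‖μ‖ ^ ((3:ℝ)/2) := by rw [h3, div_div]


lemma u_exp_le_one {u : ℝ} (hu : 0 ≤ u) : u * Real.exp (-u) ≤ 1 := by
  rw [Real.exp_neg, mul_inv_le_iff₀ (Real.exp_pos u), one_mul]
  linarith [Real.add_one_le_exp u]

lemma inn_differentiableAt (hg : ContDiff ℝ 1 g) (hgi : Integrable g)
    (hτ : 0 < τ) (b : ℝ) {μ₀ : ℂ} (hμ₀ : 0 < μ₀.im) :
    DifferentiableAt ℂ (Inn g τ b) μ₀ := by
  have hgc : Continuous g := hg.continuous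
  set δ : ℝ := μ₀.im / 2 with hδ
  have hδpos : 0 < δ := by positivity
  -- any μ in the ball has im μ ≥ δ
  have him : ∀ μ : ℂ, μ ∈ Metric.ball μ₀ δ → δ ≤ μ.im := by
    intro μ hmem
    have h1 : |(μ - μ₀).im| ≤ ‖μ - μ₀‖ := Complex.abs_im_le_norm _
    have h2 : ‖μ - μ₀‖ < δ := by
      rwa [Metric.mem_ball, Complex.dist_eq] at hmem
    have h3 : |μ.im - μ₀.im| < δ := by
      rw [← Complex.sub_im]; exact lt_of_le_of_lt h1 h2
    have := abs_lt.mp h3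
    simp only [hδ] at *
    linarith [this.1]
  have main := hasDerivAt_integral_of_dominated_loc_of_deriv_le (μ := volume.restrict (Set.Ioi b))
    (F := fun (μ : ℂ) (η : ℝ) => g η * Complex.exp (Complex.I * τ * μ * (↑η - ↑b)))
    (F' := fun (μ : ℂ) (η : ℝ) =>
      g η * (Complex.I * τ * (↑η - ↑b) * Complex.exp (Complex.I * τ * μ * (↑η - ↑b))))
    (x₀ := μ₀) (bound := fun η => ‖g η‖ * δ⁻¹) (Metric.ball_mem_nhds μ₀ hδpos) ?_ ?_ ?_ ?_ ?_ ?_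
  · exact main.2.differentiableAt
  · filter_upwards with μ
    exact ((hgc.mul (cont_ker τ b μ)).aestronglyMeasurable)
  · exact integrableOn_mul_ker hgc hgi hτ b hμ₀.le
  · apply Continuous.aestronglyMeasurable
    fun_prop
  · filter_upwards [ae_restrict_mem measurableSet_Ioi] with η hη
    intro μ hmem
    have hδμ : δ ≤ μ.im := him μ hmem
    have hηb : 0 ≤ η - b := by simp at hη; linarith
    rw [norm_mul]
    apply mul_le_mul_of_nonneg_left _ (norm_nonneg _)
    -- ‖I τ (η-b) exp(...)‖ ≤ δ⁻¹
    have hnorm : ‖Complex.I * (τ:ℂ) * (↑η - ↑b) * Complex.exp (Complex.I * τ * μ * (↑η - ↑b))‖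
        = (τ * (η - b)) * Real.exp (-(τ * μ.im * (η - b))) := by
      rw [norm_mul, norm_ker]
      congr 1
      simp only [norm_mul, Complex.norm_I, Complex.norm_real, Real.norm_eq_abs]
      rw [show ((η:ℂ) - (b:ℂ)) = ((η - b : ℝ) : ℂ) by push_cast; ring]
      rw [Complex.norm_real, Real.norm_eq_abs, abs_of_pos hτ, _root_.abs_of_nonneg hηb, one_mul]
    rw [hnorm]
    -- τ(η-b) exp(-τ μ.im (η-b)) ≤ τ(η-b) exp(-τ δ (η-b)) ≤ δ⁻¹
    have step1 : Real.exp (-(τ * μ.im * (η - b))) ≤ Real.exp (-(τ * δ * (η - b))) := by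
      apply Real.exp_le_exp.mpr
      have : τ * δ * (η - b) ≤ τ * μ.im * (η - b) :=
        mul_le_mul_of_nonneg_right (mul_le_mul_of_nonneg_left hδμ hτ.le) hηb
      linarith
    have step2 : (τ * (η - b)) * Real.exp (-(τ * δ * (η - b))) ≤ δ⁻¹ := by
      have h4 := u_exp_le_one (u := τ * δ * (η - b)) (by positivity)
      have h5 : (τ * (η - b)) * Real.exp (-(τ * δ * (η - b)))
          = δ⁻¹ * ((τ * δ * (η - b)) * Real.exp (-(τ * δ * (η - b)))) := by
        field_simp
      rw [h5]
      calc δ⁻¹ * ((τ * δ * (η - b)) * Real.exp (-(τ * δ * (η - b))))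
          ≤ δ⁻¹ * 1 := mul_le_mul_of_nonneg_left h4 (by positivity)
        _ = δ⁻¹ := mul_one _
    calc (τ * (η - b)) * Real.exp (-(τ * μ.im * (η - b)))
        ≤ (τ * (η - b)) * Real.exp (-(τ * δ * (η - b))) :=
          mul_le_mul_of_nonneg_left step1 (by positivity)
      _ ≤ δ⁻¹ := step2
  · exact (hgi.norm.restrict).mul_const _
  · filter_upwards with η
    intro μ hmem
    have h1 : HasDerivAt (fun μ : ℂ => Complex.I * τ * μ * (↑η - ↑b))
        (Complex.I * τ * (↑η - ↑b)) μ := by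
      simpa using ((hasDerivAt_id μ).const_mul (Complex.I * (τ:ℂ))).mul_const ((η:ℂ) - (b:ℂ))
    have h2 := (h1.cexp).const_mul (g η)
    exact h2.congr_deriv (by ring)

variable {χ : ℂ → ℂ} {C : ℝ}

set_option maxHeartbeats 1000000 in
lemma line_continuous (hχc : ContinuousOn χ {z : ℂ | 0 ≤ z.im})
    (hg : ContDiff ℝ 1 g) (hgi : Integrable g) (hτ : 0 < τ) (b : ℝ) {y : ℝ} (hy : 0 < y) :
    Continuous (fun t : ℝ => χ (↑t + ↑y * Complex.I) * Inn g τ b (↑t + ↑y * Complex.I)) := by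
  have hline : Continuous (fun t : ℝ => (↑t + ↑y * Complex.I : ℂ)) := by fun_prop
  apply Continuous.mul
  · exact hχc.comp_continuous hline (fun t => by simp [hy.le])
  · have hInnDiff : DifferentiableOn ℂ (Inn g τ b) {z : ℂ | 0 < z.im} :=
      fun μ hμ => (inn_differentiableAt hg hgi hτ b hμ).differentiableWithinAt
    exact hInnDiff.continuousOn.comp_continuous hline (fun t => by simp [hy])

lemma line_norm_le (hχb : ∀ μ : ℂ, 0 ≤ μ.im → 1 ≤ ‖μ‖ →
      ‖χ μ‖ ≤ C / ‖μ‖ ^ ((1 : ℝ) / 2)) (hC : 0 ≤ C)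
    (hg : ContDiff ℝ 1 g) (hgi : Integrable g) (hgi' : Integrable (deriv g))
    (hτ : 0 < τ) (b : ℝ) {y t : ℝ} (hy : 0 < y) (ht : 1 ≤ |t|) :
    ‖χ (↑t + ↑y * Complex.I) * Inn g τ b (↑t + ↑y * Complex.I)‖
      ≤ (2 ^ ((5:ℝ)/4) * (C * Kc g b / τ)) * (1 + |t|) ^ (-((5:ℝ)/4)) := by
  set μ : ℂ := ↑t + ↑y * Complex.I with hμdef
  have him : μ.im = y := by simp [hμdef]
  have hre : μ.re = t := by simp [hμdef]
  have habs_t : |t| ≤ ‖μ‖ := by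
    calc |t| = |μ.re| := by rw [hre]
      _ ≤ ‖μ‖ := Complex.abs_re_le_norm μ
  have habs1 : 1 ≤ ‖μ‖ := le_trans ht habs_t
  have habs0 : (0:ℝ) < ‖μ‖ := lt_of_lt_of_le one_pos habs1
  have hF := norm_F_le hχb hC hg hgi hgi' hτ b (μ := μ) (by rw [him]; exact hy) habs1
  have hD : 0 ≤ C * Kc g b / τ := by
    have := Kc_nonneg g b
    positivity
  refine hF.trans ?_
  have ht0 : (0:ℝ) < |t| := lt_of_lt_of_le one_pos ht
  have step : (1 + |t|) ^ ((5:ℝ)/4) ≤ 2 ^ ((5:ℝ)/4) * ‖μ‖ ^ ((3:ℝ)/2) := by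
    calc (1 + |t|) ^ ((5:ℝ)/4) ≤ (2 * |t|) ^ ((5:ℝ)/4) := by
          apply Real.rpow_le_rpow (by positivity) (by linarith) (by norm_num)
      _ = 2 ^ ((5:ℝ)/4) * |t| ^ ((5:ℝ)/4) := Real.mul_rpow (by norm_num) (abs_nonneg t)
      _ ≤ 2 ^ ((5:ℝ)/4) * ‖μ‖ ^ ((3:ℝ)/2) := by
          apply mul_le_mul_of_nonneg_left _ (by positivity)
          calc |t| ^ ((5:ℝ)/4) ≤ |t| ^ ((3:ℝ)/2) :=
                Real.rpow_le_rpow_of_exponent_le ht (by norm_num)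
            _ ≤ ‖μ‖ ^ ((3:ℝ)/2) :=
                Real.rpow_le_rpow (abs_nonneg t) habs_t (by norm_num)
  rw [Real.rpow_neg (by positivity), ← div_eq_mul_inv,
    div_le_div_iff₀ (by positivity) (by positivity)]
  calc C * Kc g b / τ * (1 + |t|) ^ ((5:ℝ)/4)
      ≤ C * Kc g b / τ * (2 ^ ((5:ℝ)/4) * ‖μ‖ ^ ((3:ℝ)/2)) :=
        mul_le_mul_of_nonneg_left step hD
    _ = 2 ^ ((5:ℝ)/4) * (C * Kc g b / τ) * ‖μ‖ ^ ((3:ℝ)/2) := by ring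


lemma jb_integrable : Integrable (fun t : ℝ => (1 + |t|) ^ (-((5:ℝ)/4))) := by
  have h := integrable_one_add_norm (E := ℝ) (μ := volume) (r := (5:ℝ)/4) (by norm_num)
  simpa [Real.norm_eq_abs] using h

lemma line_integrable (hχc : ContinuousOn χ {z : ℂ | 0 ≤ z.im})
    (hχb : ∀ μ : ℂ, 0 ≤ μ.im → 1 ≤ ‖μ‖ →
      ‖χ μ‖ ≤ C / ‖μ‖ ^ ((1 : ℝ) / 2)) (hC : 0 ≤ C)
    (hg : ContDiff ℝ 1 g) (hgi : Integrable g) (hgi' : Integrable (deriv g))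
    (hτ : 0 < τ) (b : ℝ) {y : ℝ} (hy : 0 < y) :
    Integrable (fun t : ℝ => χ (↑t + ↑y * Complex.I) * Inn g τ b (↑t + ↑y * Complex.I)) := by
  have hcont := line_continuous hχc hg hgi hτ b hy
  have h1 : IntegrableOn
      (fun t : ℝ => χ (↑t + ↑y * Complex.I) * Inn g τ b (↑t + ↑y * Complex.I))
      (Set.Icc (-1) 1) := hcont.integrableOn_Icc
  have h2 : IntegrableOn
      (fun t : ℝ => χ (↑t + ↑y * Complex.I) * Inn g τ b (↑t + ↑y * Complex.I))
      {t : ℝ | 1 ≤ |t|} := by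
    refine Integrable.mono'
      ((jb_integrable.const_mul (2 ^ ((5:ℝ)/4) * (C * Kc g b / τ))).restrict)
      (hcont.aestronglyMeasurable.restrict) ?_
    have hms : MeasurableSet {t : ℝ | 1 ≤ |t|} := by
      have : IsClosed {t : ℝ | 1 ≤ |t|} := isClosed_le continuous_const continuous_abs
      exact this.measurableSet
    filter_upwards [ae_restrict_mem hms] with t ht
    exact line_norm_le hχb hC hg hgi hgi' hτ b hy ht
  have hcover : (Set.univ : Set ℝ) ⊆ Set.Icc (-1) 1 ∪ {t : ℝ | 1 ≤ |t|} := by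
    intro t _
    by_cases h : |t| ≤ 1
    · left; exact abs_le.mp h
    · right; exact le_of_not_ge h
  rw [← integrableOn_univ]
  exact (h1.union h2).mono_set hcover


lemma line_norm_le_high (hχb : ∀ μ : ℂ, 0 ≤ μ.im → 1 ≤ ‖μ‖ →
      ‖χ μ‖ ≤ C / ‖μ‖ ^ ((1 : ℝ) / 2)) (hC : 0 ≤ C)
    (hg : ContDiff ℝ 1 g) (hgi : Integrable g) (hgi' : Integrable (deriv g))
    (hτ : 0 < τ) (b : ℝ) {M : ℝ} (hM : 1 ≤ M) (t : ℝ) :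
    ‖χ (↑t + ↑M * Complex.I) * Inn g τ b (↑t + ↑M * Complex.I)‖
      ≤ (2 ^ ((5:ℝ)/4) * (C * Kc g b / τ)) * M ^ (-((1:ℝ)/4)) * (1 + |t|) ^ (-((5:ℝ)/4)) := by
  set μ : ℂ := ↑t + ↑M * Complex.I with hμdef
  have hM0 : (0:ℝ) < M := lt_of_lt_of_le one_pos hM
  have him : μ.im = M := by simp [hμdef]
  have habs_t : |t| ≤ ‖μ‖ := by
    calc |t| = |μ.re| := by simp [hμdef]
      _ ≤ ‖μ‖ := Complex.abs_re_le_norm μ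
  have habs_M : M ≤ ‖μ‖ := by
    calc M = μ.im := him.symm
      _ ≤ |μ.im| := le_abs_self _
      _ ≤ ‖μ‖ := Complex.abs_im_le_norm μ
  have habs1 : 1 ≤ ‖μ‖ := le_trans hM habs_M
  have habs0 : (0:ℝ) < ‖μ‖ := lt_of_lt_of_le one_pos habs1
  have hF := norm_F_le hχb hC hg hgi hgi' hτ b (μ := μ) (by rw [him]; exact hM0) habs1
  have hD : 0 ≤ C * Kc g b / τ := by
    have := Kc_nonneg g b
    positivity
  refine hF.trans ?_
  have step : M ^ ((1:ℝ)/4) * (1 + |t|) ^ ((5:ℝ)/4)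
      ≤ 2 ^ ((5:ℝ)/4) * ‖μ‖ ^ ((3:ℝ)/2) := by
    have s1 : M ^ ((1:ℝ)/4) ≤ ‖μ‖ ^ ((1:ℝ)/4) :=
      Real.rpow_le_rpow hM0.le habs_M (by norm_num)
    have s2 : (1 + |t|) ^ ((5:ℝ)/4) ≤ 2 ^ ((5:ℝ)/4) * ‖μ‖ ^ ((5:ℝ)/4) := by
      calc (1 + |t|) ^ ((5:ℝ)/4) ≤ (2 * ‖μ‖) ^ ((5:ℝ)/4) :=
            Real.rpow_le_rpow (by positivity) (by linarith) (by norm_num)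
        _ = 2 ^ ((5:ℝ)/4) * ‖μ‖ ^ ((5:ℝ)/4) := Real.mul_rpow (by norm_num) habs0.le
    calc M ^ ((1:ℝ)/4) * (1 + |t|) ^ ((5:ℝ)/4)
        ≤ ‖μ‖ ^ ((1:ℝ)/4) * (2 ^ ((5:ℝ)/4) * ‖μ‖ ^ ((5:ℝ)/4)) := by
          apply mul_le_mul s1 s2 (by positivity) (by positivity)
      _ = 2 ^ ((5:ℝ)/4) * (‖μ‖ ^ ((1:ℝ)/4) * ‖μ‖ ^ ((5:ℝ)/4)) := by ring
      _ = 2 ^ ((5:ℝ)/4) * ‖μ‖ ^ ((3:ℝ)/2) := by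
          rw [← Real.rpow_add habs0]; norm_num
  rw [Real.rpow_neg hM0.le, Real.rpow_neg (by positivity), mul_assoc, ← mul_inv,
    ← div_eq_mul_inv, div_le_div_iff₀ (by positivity) (by positivity)]
  calc C * Kc g b / τ * (M ^ ((1:ℝ)/4) * (1 + |t|) ^ ((5:ℝ)/4))
      ≤ C * Kc g b / τ * (2 ^ ((5:ℝ)/4) * ‖μ‖ ^ ((3:ℝ)/2)) :=
        mul_le_mul_of_nonneg_left step hD
    _ = 2 ^ ((5:ℝ)/4) * (C * Kc g b / τ) * ‖μ‖ ^ ((3:ℝ)/2) := by ring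

lemma line_integral_norm_le_high (hχc : ContinuousOn χ {z : ℂ | 0 ≤ z.im})
    (hχb : ∀ μ : ℂ, 0 ≤ μ.im → 1 ≤ ‖μ‖ →
      ‖χ μ‖ ≤ C / ‖μ‖ ^ ((1 : ℝ) / 2)) (hC : 0 ≤ C)
    (hg : ContDiff ℝ 1 g) (hgi : Integrable g) (hgi' : Integrable (deriv g))
    (hτ : 0 < τ) (b : ℝ) {M : ℝ} (hM : 1 ≤ M) :
    ‖∫ t : ℝ, χ (↑t + ↑M * Complex.I) * Inn g τ b (↑t + ↑M * Complex.I)‖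
      ≤ (2 ^ ((5:ℝ)/4) * (C * Kc g b / τ) * ∫ t : ℝ, (1 + |t|) ^ (-((5:ℝ)/4)))
          * M ^ (-((1:ℝ)/4)) := by
  have hbd := norm_integral_le_of_norm_le
    ((jb_integrable.const_mul (2 ^ ((5:ℝ)/4) * (C * Kc g b / τ) * M ^ (-((1:ℝ)/4)))))
    (Filter.Eventually.of_forall fun t => by
      have := line_norm_le_high hχb hC hg hgi hgi' hτ b hM t
      calc ‖χ (↑t + ↑M * Complex.I) * Inn g τ b (↑t + ↑M * Complex.I)‖
          ≤ (2 ^ ((5:ℝ)/4) * (C * Kc g b / τ)) * M ^ (-((1:ℝ)/4)) * (1 + |t|) ^ (-((5:ℝ)/4)) :=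
            this
        _ = 2 ^ ((5:ℝ)/4) * (C * Kc g b / τ) * M ^ (-((1:ℝ)/4)) * (1 + |t|) ^ (-((5:ℝ)/4)) := by
            ring)
  refine hbd.trans ?_
  rw [integral_const_mul]
  ring_nf
  exact le_refl _


set_option maxHeartbeats 400000 in
lemma vert_bound (hχb : ∀ μ : ℂ, 0 ≤ μ.im → 1 ≤ ‖μ‖ →
      ‖χ μ‖ ≤ C / ‖μ‖ ^ ((1 : ℝ) / 2)) (hC : 0 ≤ C)
    (hg : ContDiff ℝ 1 g) (hgi : Integrable g) (hgi' : Integrable (deriv g))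
    (hτ : 0 < τ) (b : ℝ) {ε' M : ℝ} (hε' : 0 < ε') (hM : ε' ≤ M)
    {σ : ℝ} (hσ : 1 ≤ |σ|) :
    ‖∫ y in ε'..M, χ (↑σ + ↑y * Complex.I) * Inn g τ b (↑σ + ↑y * Complex.I)‖
      ≤ (C * Kc g b / τ) / |σ| ^ ((3:ℝ)/2) * |M - ε'| := by
  apply intervalIntegral.norm_integral_le_of_norm_le_const
  intro y hy
  rw [Set.uIoc_of_le hM] at hy
  have hy0 : 0 < y := lt_trans hε' hy.1
  have him : ((σ:ℂ) + ↑y * Complex.I).im = y := by simp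
  have habs_σ : |σ| ≤ ‖(σ:ℂ) + ↑y * Complex.I‖ := by
    calc |σ| = |((σ:ℂ) + ↑y * Complex.I).re| := by simp
      _ ≤ ‖_‖ := Complex.abs_re_le_norm _
  have habs1 : 1 ≤ ‖(σ:ℂ) + ↑y * Complex.I‖ := le_trans hσ habs_σ
  have hμpos : (0:ℝ) < ((σ:ℂ) + ↑y * Complex.I).im := by rw [him]; exact hy0
  have hF := norm_F_le hχb hC hg hgi hgi' hτ b hμpos habs1
  refine hF.trans ?_
  have hstep : |σ| ^ ((3:ℝ)/2) ≤ ‖(σ:ℂ) + ↑y * Complex.I‖ ^ ((3:ℝ)/2) :=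
    Real.rpow_le_rpow (abs_nonneg σ) habs_σ (by norm_num)
  have hσ0 : (0:ℝ) < |σ| := lt_of_lt_of_le one_pos hσ
  have hD : 0 ≤ C * Kc g b / τ := by
    have := Kc_nonneg g b
    positivity
  exact div_le_div_of_nonneg_left hD (by positivity) hstep


end TailVanish

open TailVanish

set_option maxHeartbeats 1000000 in
/-- Vanishing of the right-tail contribution to the constraint functional:
if `χ₁₁` is holomorphic and `O(|μ|^{−1/2})` in the upper half-plane and `g` is `C¹`
with `g, g'` integrable, then `∫_{ℝ+iε'} χ₁₁(μ) ∫_b^∞ g(η) e^{iτμ(η−b)} dη dμ/(2πi) = 0`. -/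
theorem tail_contribution_vanishes (χ : ℂ → ℂ) (C : ℝ)
    (hχ : DifferentiableOn ℂ χ {z : ℂ | 0 < z.im})
    (hχc : ContinuousOn χ {z : ℂ | 0 ≤ z.im})
    (hχb : ∀ μ : ℂ, 0 ≤ μ.im → 1 ≤ ‖μ‖ →
      ‖χ μ‖ ≤ C / ‖μ‖ ^ ((1 : ℝ) / 2))
    (g : ℝ → ℂ) (hg : ContDiff ℝ 1 g) (hgi : Integrable g) (hgi' : Integrable (deriv g))
    (b τ : ℝ) (hτ : 0 < τ) :
    ∀ ε' : ℝ, 0 < ε' →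
      (∫ t : ℝ, χ (t + Complex.I * ε') *
          ∫ η in Set.Ioi b, g η * Complex.exp (Complex.I * τ * (t + Complex.I * ε') * (η - b)))
        / (2 * Real.pi * Complex.I) = 0 := by
  intro ε' hε'
  have hC : 0 ≤ C := by
    have h := hχb Complex.I (by simp) (by simp)
    rw [Complex.norm_I, Real.one_rpow, div_one] at h
    exact le_trans (norm_nonneg _) h
  have hD : 0 ≤ C * Kc g b / τ := by
    have := Kc_nonneg g b
    positivity
  have hFdiff : DifferentiableOn ℂ (fun μ => χ μ * Inn g τ b μ) {z : ℂ | 0 < z.im} :=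
    hχ.mul (fun μ hμ => (inn_differentiableAt hg hgi hτ b hμ).differentiableWithinAt)
  obtain ⟨L, hLdef⟩ : ∃ L : ℝ → ℂ, L = fun y : ℝ =>
      ∫ t : ℝ, χ (↑t + ↑y * Complex.I) * Inn g τ b (↑t + ↑y * Complex.I) := ⟨_, rfl⟩
  have hconst : ∀ M : ℝ, ε' ≤ M → L ε' = L M := by
    intro M hM
    have hM0 : 0 < M := lt_of_lt_of_le hε' hM
    -- the rectangle identity
    have key : ∀ R : ℝ,
        (∫ x in (-R)..R, χ (↑x + ↑ε' * Complex.I) * Inn g τ b (↑x + ↑ε' * Complex.I))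
          - (∫ x in (-R)..R, χ (↑x + ↑M * Complex.I) * Inn g τ b (↑x + ↑M * Complex.I))
          + Complex.I • (∫ y in ε'..M,
              χ (↑R + ↑y * Complex.I) * Inn g τ b (↑R + ↑y * Complex.I))
          - Complex.I • (∫ y in ε'..M,
              χ (↑(-R : ℝ) + ↑y * Complex.I) * Inn g τ b (↑(-R : ℝ) + ↑y * Complex.I)) = 0 := by
      intro R
      have hsub : (Set.uIcc (-R : ℝ) R ×ℂ Set.uIcc ε' M) ⊆ {z : ℂ | 0 < z.im} := by
        intro z hz
        rw [Complex.mem_reProdIm] at hz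
        have h2 := hz.2
        rw [Set.uIcc_of_le hM] at h2
        exact lt_of_lt_of_le hε' h2.1
      have hrect := Complex.integral_boundary_rect_eq_zero_of_differentiableOn
        (fun μ => χ μ * Inn g τ b μ) (⟨-R, ε'⟩ : ℂ) (⟨R, M⟩ : ℂ) (hFdiff.mono hsub)
      exact hrect
    -- limits as R → ∞
    have h1 : Tendsto (fun R : ℝ =>
        ∫ x in (-R)..R, χ (↑x + ↑ε' * Complex.I) * Inn g τ b (↑x + ↑ε' * Complex.I))
        atTop (𝓝 (L ε')) := by
      rw [hLdef]
      exact intervalIntegral_tendsto_integral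
        (line_integrable hχc hχb hC hg hgi hgi' hτ b hε')
        tendsto_neg_atTop_atBot tendsto_id
    have h2 : Tendsto (fun R : ℝ =>
        ∫ x in (-R)..R, χ (↑x + ↑M * Complex.I) * Inn g τ b (↑x + ↑M * Complex.I))
        atTop (𝓝 (L M)) := by
      rw [hLdef]
      exact intervalIntegral_tendsto_integral
        (line_integrable hχc hχb hC hg hgi hgi' hτ b hM0)
        tendsto_neg_atTop_atBot tendsto_id
    have hrpow : Tendsto (fun R : ℝ =>
        (C * Kc g b / τ * |M - ε'|) * R ^ (-((3:ℝ)/2))) atTop (𝓝 0) := by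
      simpa using (tendsto_rpow_neg_atTop (y := (3:ℝ)/2) (by norm_num)).const_mul
        (C * Kc g b / τ * |M - ε'|)
    have hvR : Tendsto (fun R : ℝ => Complex.I • ∫ y in ε'..M,
        χ (↑R + ↑y * Complex.I) * Inn g τ b (↑R + ↑y * Complex.I)) atTop (𝓝 0) := by
      apply squeeze_zero_norm' _ hrpow
      filter_upwards [eventually_ge_atTop (1:ℝ)] with R hR
      have hR0 : (0:ℝ) < R := lt_of_lt_of_le one_pos hR
      rw [norm_smul, Complex.norm_I, one_mul]
      calc ‖∫ y in ε'..M, χ (↑R + ↑y * Complex.I) * Inn g τ b (↑R + ↑y * Complex.I)‖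
          ≤ (C * Kc g b / τ) / |R| ^ ((3:ℝ)/2) * |M - ε'| :=
            vert_bound hχb hC hg hgi hgi' hτ b hε' hM (σ := R) (by rwa [abs_of_pos hR0])
        _ = (C * Kc g b / τ * |M - ε'|) * R ^ (-((3:ℝ)/2)) := by
            rw [abs_of_pos hR0, Real.rpow_neg hR0.le]
            ring
    have hvL : Tendsto (fun R : ℝ => Complex.I • ∫ y in ε'..M,
        χ (↑(-R : ℝ) + ↑y * Complex.I) * Inn g τ b (↑(-R : ℝ) + ↑y * Complex.I)) atTop (𝓝 0) := by
      apply squeeze_zero_norm' _ hrpow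
      filter_upwards [eventually_ge_atTop (1:ℝ)] with R hR
      have hR0 : (0:ℝ) < R := lt_of_lt_of_le one_pos hR
      rw [norm_smul, Complex.norm_I, one_mul]
      have hb := vert_bound hχb hC hg hgi hgi' hτ b hε' hM (σ := -R)
        (by rw [abs_neg, abs_of_pos hR0]; exact hR)
      calc ‖∫ y in ε'..M, χ (↑(-R : ℝ) + ↑y * Complex.I) * Inn g τ b (↑(-R : ℝ) + ↑y * Complex.I)‖
          ≤ (C * Kc g b / τ) / |(-R)| ^ ((3:ℝ)/2) * |M - ε'| := hb
        _ = (C * Kc g b / τ * |M - ε'|) * R ^ (-((3:ℝ)/2)) := by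
            rw [abs_neg, abs_of_pos hR0, Real.rpow_neg hR0.le]
            ring
    have h5 := ((h1.sub h2).add hvR).sub hvL
    have h6 : Tendsto (fun R : ℝ =>
        (∫ x in (-R)..R, χ (↑x + ↑ε' * Complex.I) * Inn g τ b (↑x + ↑ε' * Complex.I))
          - (∫ x in (-R)..R, χ (↑x + ↑M * Complex.I) * Inn g τ b (↑x + ↑M * Complex.I))
          + Complex.I • (∫ y in ε'..M,
              χ (↑R + ↑y * Complex.I) * Inn g τ b (↑R + ↑y * Complex.I))
          - Complex.I • (∫ y in ε'..M,
              χ (↑(-R : ℝ) + ↑y * Complex.I) * Inn g τ b (↑(-R : ℝ) + ↑y * Complex.I)))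
        atTop (𝓝 0) :=
      Tendsto.congr (fun R => (key R).symm) tendsto_const_nhds
    have h7 := tendsto_nhds_unique h5 h6
    simpa using sub_eq_zero.mp (by simpa using h7)
  -- decay of the line integral as M → ∞
  have hdecay : Tendsto (fun M : ℝ =>
      (2 ^ ((5:ℝ)/4) * (C * Kc g b / τ) * ∫ t : ℝ, (1 + |t|) ^ (-((5:ℝ)/4)))
        * M ^ (-((1:ℝ)/4))) atTop (𝓝 0) := by
    simpa using (tendsto_rpow_neg_atTop (y := (1:ℝ)/4) (by norm_num)).const_mul
      (2 ^ ((5:ℝ)/4) * (C * Kc g b / τ) * ∫ t : ℝ, (1 + |t|) ^ (-((5:ℝ)/4)))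
  have hub : ∀ᶠ M in atTop, ‖L ε'‖ ≤
      (2 ^ ((5:ℝ)/4) * (C * Kc g b / τ) * ∫ t : ℝ, (1 + |t|) ^ (-((5:ℝ)/4)))
        * M ^ (-((1:ℝ)/4)) := by
    filter_upwards [eventually_ge_atTop (max 1 ε')] with M hM
    rw [hconst M (le_trans (le_max_right _ _) hM), hLdef]
    exact line_integral_norm_le_high hχc hχb hC hg hgi hgi' hτ b
      (le_trans (le_max_left _ _) hM)
  have hL0 : L ε' = 0 := norm_le_zero_iff.mp (ge_of_tendsto hdecay hub)
  have hmatch : (∫ t : ℝ, χ (↑t + Complex.I * ↑ε') *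
      ∫ η in Set.Ioi b, g η * Complex.exp (Complex.I * ↑τ * (↑t + Complex.I * ↑ε') * (↑η - ↑b)))
      = L ε' := by
    have hcomm : ∀ t : ℝ, ((t : ℂ) + Complex.I * (ε' : ℂ)) = ((t : ℂ) + (ε' : ℂ) * Complex.I) :=
      fun t => by ring
    simp only [hcomm]
    rw [hLdef]
    rfl
  rw [hmatch, hL0, zero_div]
end
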